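/- If r₁, r₂ ∈ R_∞ have the same invariants — the same multiset of quasi-cycle lengths, the same multiset of cycle lengths, and the same number of points outside D(r) ∪ I(r) — then there exists a finite permutation s ∈ S_∞ with r₁ = s r₂ s⁻¹. -/

import Mathlib

/-- Partial maps of `ℕ`, modeling elements of the symmetric inverse semigroup `R_∞`. -/
def PB := ℕ → Option ℕ

/-- Iteration of a partial map. -/
def PB.iter (g : PB) : ℕ → ℕ → Option ℕ
  | 0, a => some a
  | k + 1, a => (PB.iter g k a).bind g

/-- The domain `D(r)`. -/
def PB.Dom (g : PB) : Set ℕ := {x | g x ≠ none}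

/-- The range `I(r)`. -/
def PB.Ran (g : PB) : Set ℕ := {y | ∃ x, g x = some y}

/-- Membership in `R_∞`: injective, identity outside a finite set. -/
def PB.Valid (g : PB) : Prop :=
  (∀ x y z, g x = some z → g y = some z → x = y) ∧ {x | g x ≠ some x}.Finite

/-- `m(r,a)`: the least `k ≥ 1` with `r^k(a) ∈ I(r) \ D(r)` (for `a ∈ D(r) \ I(r)`). -/
noncomputable def PB.qlen (g : PB) (a : ℕ) : ℕ :=
  sInf {k | 1 ≤ k ∧ ∃ y, g.iter k a = some y ∧ y ∈ g.Ran \ g.Dom}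

/-- `x` lies on a (usual) cycle of `r` of least period `n`. -/
def PB.CycPt (g : PB) (x n : ℕ) : Prop :=
  (∀ k, ∃ y, g.iter k x = some y) ∧ IsLeast {k | 1 ≤ k ∧ g.iter k x = some x} n

/-- Conjugation of a partial bijection by a permutation: `s r s⁻¹`. -/
def PB.conj (s : Equiv.Perm ℕ) (g : PB) : PB := fun x => (g (s⁻¹ x)).map s

namespace PB

variable (g : PB)

lemma iter_zero (a : ℕ) : g.iter 0 a = some a := rfl
lemma iter_succ (k a : ℕ) : g.iter (k+1) a = (g.iter k a).bind g := rfl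
lemma iter_one (a : ℕ) : g.iter 1 a = g a := by
  show (some a).bind g = g a; rfl

lemma iter_add (m n a : ℕ) : g.iter (m + n) a = (g.iter m a).bind (g.iter n) := by
  induction n with
  | zero => cases h : g.iter m a <;> simp [h, iter_zero]
  | succ n ih =>
      rw [← Nat.add_assoc, iter_succ, ih]
      cases h : g.iter m a with
      | none => rfl
      | some b => simp [Option.bind_some, iter_succ]

lemma iter_none_le {k k' a : ℕ} (h : g.iter k a = none) (hk : k ≤ k') : g.iter k' a = none := by
  obtain ⟨d, rfl⟩ := Nat.exists_eq_add_of_le hk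
  rw [iter_add, h]; rfl

lemma iter_some_of_le {k k' a y : ℕ} (h : g.iter k' a = some y) (hk : k ≤ k') :
    ∃ z, g.iter k a = some z := by
  cases hz : g.iter k a with
  | none => rw [iter_none_le g hz hk] at h; cases h
  | some z => exact ⟨z, rfl⟩

lemma iter_inj (hg : g.Valid) :
    ∀ k x y z, g.iter k x = some z → g.iter k y = some z → x = y := by
  intro k
  induction k with
  | zero => intro x y z hx hy; rw [iter_zero] at hx hy; cases hx; cases hy; rfl
  | succ k ih =>
      intro x y z hx hy
      rw [iter_succ] at hx hy
      cases hux : g.iter k x with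
      | none => rw [hux] at hx; cases hx
      | some u =>
        cases huy : g.iter k y with
        | none => rw [huy] at hy; cases hy
        | some v =>
          rw [hux] at hx; rw [huy] at hy
          have : u = v := hg.1 u v z hx hy
          exact ih x y v (this ▸ hux) huy

def Supp (g : PB) : Set ℕ := {x | g x ≠ some x}

lemma supp_finite (hg : g.Valid) : (Supp g).Finite := hg.2

lemma notMem_supp {x : ℕ} : x ∉ Supp g ↔ g x = some x := by
  simp [Supp]

lemma supp_step (hg : g.Valid) {x y : ℕ} (hx : x ∈ Supp g) (hxy : g x = some y) :
    y ∈ Supp g := by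
  intro hy
  have hxyeq : x = y := hg.1 x y y hxy hy
  subst hxyeq
  exact hx hxy

lemma supp_iter (hg : g.Valid) {x y k : ℕ} (hx : x ∈ Supp g) (h : g.iter k x = some y) :
    y ∈ Supp g := by
  induction k generalizing y with
  | zero => rw [iter_zero] at h; cases h; exact hx
  | succ k ih =>
      rw [iter_succ] at h
      cases hu : g.iter k x with
      | none => rw [hu] at h; cases h
      | some u => rw [hu] at h; exact supp_step g hg (ih hu) h

lemma iter_fix {x : ℕ} (h : g x = some x) (k : ℕ) : g.iter k x = some x := by
  induction k with
  | zero => rfl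
  | succ k ih => rw [iter_succ, ih]; exact h

lemma mem_Dom {x : ℕ} : x ∈ g.Dom ↔ ∃ y, g x = some y := by
  unfold Dom
  cases h : g x <;> simp [h]

lemma mem_Ran_of_iter {a z m : ℕ} (hm : 1 ≤ m) (h : g.iter m a = some z) : z ∈ g.Ran := by
  obtain ⟨t, rfl⟩ := Nat.exists_eq_add_of_le hm
  rw [Nat.add_comm, iter_succ] at h
  cases hw : g.iter t a with
  | none => rw [hw] at h; cases h
  | some w => rw [hw] at h; exact ⟨w, h⟩

def Q (g : PB) : Set ℕ := g.Dom \ g.Ran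

lemma Q_subset_supp {a : ℕ} (ha : a ∈ Q g) : a ∈ Supp g := by
  intro hfix
  exact ha.2 ⟨a, hfix⟩

lemma periodic_of_total (hg : g.Valid) {x : ℕ} (hx : x ∈ Supp g)
    (h : ∀ k, ∃ y, g.iter k x = some y) : ∃ m, 1 ≤ m ∧ g.iter m x = some x := by
  have : Finite ↥(Supp g) := (supp_finite g hg).to_subtype
  have hmem : ∀ k, (g.iter k x).getD 0 ∈ Supp g := by
    intro k
    obtain ⟨y, hy⟩ := h k
    rw [hy]
    exact supp_iter g hg hx hy
  obtain ⟨i, j, hne, hEq⟩ :=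
    Finite.exists_ne_map_eq_of_infinite (fun k : ℕ => (⟨(g.iter k x).getD 0, hmem k⟩ : ↥(Supp g)))
  have key : ∀ i j : ℕ, i < j → g.iter i x = g.iter j x → ∃ m, 1 ≤ m ∧ g.iter m x = some x := by
    intro i j hij heq
    obtain ⟨w, hw⟩ := h (j - i)
    have h2 : g.iter i w = g.iter j x := by
      have := iter_add g (j - i) i x
      rw [Nat.sub_add_cancel (Nat.le_of_lt hij)] at this
      rw [this, hw]; rfl
    obtain ⟨z, hz⟩ := h i
    have hwx : w = x := iter_inj g hg i w x z (by rw [h2, ← heq, hz]) hz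
    exact ⟨j - i, by omega, by rw [hw, hwx]⟩
  have hvals : g.iter i x = g.iter j x := by
    obtain ⟨yi, hyi⟩ := h i
    obtain ⟨yj, hyj⟩ := h j
    have := congrArg Subtype.val hEq
    simp only [hyi, hyj, Option.getD_some] at this
    rw [hyi, hyj, this]
  rcases Nat.lt_or_ge i j with hij | hij
  · exact key i j hij hvals
  · have : j < i := by omega
    exact key j i this hvals.symm

lemma cycpt_of_total (hg : g.Valid) {x : ℕ} (hx : x ∈ Supp g)
    (h : ∀ k, ∃ y, g.iter k x = some y) : ∃ n, 2 ≤ n ∧ g.CycPt x n := by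
  obtain ⟨m, hm1, hmx⟩ := periodic_of_total g hg hx h
  set P := {m | 1 ≤ m ∧ g.iter m x = some x} with hP
  have hne : P.Nonempty := ⟨m, hm1, hmx⟩
  have hmemP : sInf P ∈ P := Nat.sInf_mem hne
  have hlb : ∀ b ∈ P, sInf P ≤ b := fun b hb => Nat.sInf_le hb
  refine ⟨sInf P, ?_, h, hmemP, hlb⟩
  rcases Nat.lt_or_ge (sInf P) 2 with h2 | h2
  · exfalso
    have h1' : 1 ≤ sInf P := hmemP.1
    have h1 : sInf P = 1 := by omega
    have := hmemP.2
    rw [h1, iter_one] at this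
    exact hx this
  · exact h2

lemma not_total_of_Q (hg : g.Valid) {a : ℕ} (ha : a ∈ Q g) : ∃ k, g.iter k a = none := by
  by_contra hcon
  push_neg at hcon
  have htot : ∀ k, ∃ y, g.iter k a = some y := by
    intro k
    cases hy : g.iter k a with
    | none => exact absurd hy (hcon k)
    | some y => exact ⟨y, rfl⟩
  obtain ⟨m, hm1, hmx⟩ := periodic_of_total g hg (Q_subset_supp g ha) htot
  exact ha.2 (mem_Ran_of_iter g hm1 hmx)

lemma qlen_set_nonempty (hg : g.Valid) {a : ℕ} (ha : a ∈ Q g) :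
    {k | 1 ≤ k ∧ ∃ y, g.iter k a = some y ∧ y ∈ g.Ran \ g.Dom}.Nonempty := by
  have hex := not_total_of_Q g hg ha
  classical
  let k₀ := Nat.find hex
  have hk₀ : g.iter k₀ a = none := Nat.find_spec hex
  have hk₀min : ∀ m < k₀, g.iter m a ≠ none := fun m hm => Nat.find_min hex hm
  have h0 : k₀ ≠ 0 := by
    intro h; rw [h] at hk₀; exact nomatch hk₀
  have h1 : k₀ ≠ 1 := by
    intro h; rw [h, iter_one] at hk₀; exact ha.1 hk₀
  have h2 : 2 ≤ k₀ := by omega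
  obtain ⟨e, he⟩ : ∃ e, g.iter (k₀ - 1) a = some e := by
    cases he : g.iter (k₀ - 1) a with
    | none => exact absurd he (hk₀min _ (by omega))
    | some e => exact ⟨e, rfl⟩
  have hge : g e = none := by
    have : g.iter (k₀ - 1 + 1) a = (g.iter (k₀ - 1) a).bind g := iter_succ g _ a
    rw [Nat.sub_add_cancel (by omega), hk₀, he] at this
    exact this.symm
  refine ⟨k₀ - 1, by omega, e, he, mem_Ran_of_iter g (by omega) he, fun hd => hd hge⟩

lemma qlen_spec (hg : g.Valid) {a : ℕ} (ha : a ∈ Q g) :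
    1 ≤ g.qlen a ∧ ∃ e, g.iter (g.qlen a) a = some e ∧ e ∈ g.Ran \ g.Dom :=
  Nat.sInf_mem (qlen_set_nonempty g hg ha)

lemma qlen_eq (hg : g.Valid) {a k e : ℕ} (ha : a ∈ Q g) (hk : 1 ≤ k)
    (he : g.iter k a = some e) (heD : e ∉ g.Dom) : g.qlen a = k := by
  have hkmem : k ∈ {k | 1 ≤ k ∧ ∃ y, g.iter k a = some y ∧ y ∈ g.Ran \ g.Dom} :=
    ⟨hk, e, he, mem_Ran_of_iter g hk he, heD⟩
  have hq := qlen_spec g hg ha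
  obtain ⟨hq1, e', he', he'R, he'D⟩ := hq
  have key : ∀ m m' y y', m < m' → g.iter m a = some y → y ∉ g.Dom →
      g.iter m' a = some y' → False := by
    intro m m' y y' hmm hy hyD hy'
    have hgy : g y = none := by
      by_contra hne
      exact hyD hne
    have h1 : g.iter (m + 1) a = none := by rw [iter_succ, hy]; exact hgy
    have := iter_none_le g h1 (by omega : m + 1 ≤ m')
    rw [this] at hy'
    exact nomatch hy'
  have hle : g.qlen a ≤ k := Nat.sInf_le hkmem
  rcases Nat.lt_or_ge (g.qlen a) k with hlt | hge
  · exact (key (g.qlen a) k e' e hlt he' he'D he).elim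
  · omega

lemma iter_defined_chain (hg : g.Valid) {a k : ℕ} (ha : a ∈ Q g) (hk : k ≤ g.qlen a) :
    ∃ z, g.iter k a = some z := by
  obtain ⟨_, e, he, _⟩ := qlen_spec g hg ha
  exact iter_some_of_le g he hk

lemma chain_rep_unique_aux (hg : g.Valid) {a a' k k' y : ℕ} (ha : a ∈ Q g) (ha' : a' ∈ Q g)
    (hk : k ≤ g.qlen a) (hk' : k' ≤ g.qlen a') (h : g.iter k a = some y)
    (h' : g.iter k' a' = some y) (hkk : k ≤ k') : a = a' ∧ k = k' := by
  obtain ⟨z, hz⟩ := iter_defined_chain g hg ha' (by omega : k' - k ≤ g.qlen a')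
  have h2 : g.iter k z = some y := by
    have := iter_add g (k' - k) k a'
    rw [Nat.sub_add_cancel hkk] at this
    rw [this, hz] at h'
    exact h'
  have hza : z = a := iter_inj g hg k z a y h2 h
  rcases Nat.lt_or_ge k k' with hlt | hge
  · exact absurd (mem_Ran_of_iter g (by omega : 1 ≤ k' - k) (hza ▸ hz)) ha.2
  · have hkeq : k = k' := by omega
    subst hkeq
    exact ⟨iter_inj g hg k a a' y h h', rfl⟩

lemma chain_rep_unique (hg : g.Valid) {a a' k k' y : ℕ} (ha : a ∈ Q g) (ha' : a' ∈ Q g)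
    (hk : k ≤ g.qlen a) (hk' : k' ≤ g.qlen a') (h : g.iter k a = some y)
    (h' : g.iter k' a' = some y) : a = a' ∧ k = k' := by
  rcases Nat.le_total k k' with hkk | hkk
  · exact chain_rep_unique_aux g hg ha ha' hk hk' h h' hkk
  · obtain ⟨h1, h2⟩ := chain_rep_unique_aux g hg ha' ha hk' hk h' h hkk
    exact ⟨h1.symm, h2.symm⟩

def ChainPts (g : PB) : Set ℕ :=
  {y | ∃ a, a ∈ Q g ∧ ∃ k, k ≤ g.qlen a ∧ g.iter k a = some y}

lemma chainPts_subset_supp (hg : g.Valid) : ChainPts g ⊆ Supp g := by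
  rintro y ⟨a, ha, k, _, hik⟩
  exact supp_iter g hg (Q_subset_supp g ha) hik

lemma cycpt_pos {x n : ℕ} (h : g.CycPt x n) : 1 ≤ n := h.2.1.1

lemma cycpt_unique {x n m : ℕ} (hn : g.CycPt x n) (hm : g.CycPt x m) : n = m :=
  Nat.le_antisymm (hn.2.2 hm.2.1) (hm.2.2 hn.2.1)

noncomputable def clen (g : PB) (x : ℕ) : ℕ := sInf {k | 1 ≤ k ∧ g.iter k x = some x}

lemma clen_eq {x n : ℕ} (h : g.CycPt x n) : g.clen x = n := h.2.csInf_eq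

lemma cyc_iter_eq (h : g.CycPt x n) : g.iter n x = some x := h.2.1.2

lemma cyc_mul {x n : ℕ} (h : g.CycPt x n) (t : ℕ) : g.iter (t * n) x = some x := by
  induction t with
  | zero => rw [Nat.zero_mul]; rfl
  | succ t ih =>
      have : (t + 1) * n = t * n + n := by ring
      rw [this, iter_add, ih]
      exact h.2.1.2

lemma cyc_mod {x n : ℕ} (h : g.CycPt x n) (k : ℕ) : g.iter k x = g.iter (k % n) x := by
  conv_lhs => rw [show k = (k / n) * n + k % n from (Nat.div_add_mod' k n).symm]
  rw [iter_add, cyc_mul g h]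
  rfl

lemma cyc_inj_lt_aux {x n j k : ℕ} (h : g.CycPt x n) (hj : j < n) (hk : k < n)
    (he : g.iter j x = g.iter k x) (hjk : j ≤ k) : j = k := by
  rcases Nat.lt_or_ge j k with hlt | hge
  · exfalso
    have h1 : g.iter (j + (n - k)) x = some x := by
      rw [iter_add, he, ← iter_add, Nat.add_sub_cancel' (Nat.le_of_lt hk)]
      exact h.2.1.2
    have := h.2.2 ⟨by omega, h1⟩
    omega
  · omega

lemma cyc_inj_lt {x n j k : ℕ} (h : g.CycPt x n) (hj : j < n) (hk : k < n)
    (he : g.iter j x = g.iter k x) : j = k := by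
  rcases Nat.le_total j k with hjk | hjk
  · exact cyc_inj_lt_aux g h hj hk he hjk
  · exact (cyc_inj_lt_aux g h hk hj he.symm hjk).symm

lemma cyc_step (hg : g.Valid) {x y n : ℕ} (h : g.CycPt x n) (hxy : g x = some y) :
    g.CycPt y n := by
  have hiter : ∀ k, g.iter k y = g.iter (1 + k) x := by
    intro k
    rw [iter_add, iter_one, hxy]
    rfl
  refine ⟨?_, ⟨h.2.1.1, ?_⟩, ?_⟩
  · intro k
    rw [hiter k]
    exact h.1 (1 + k)
  · rw [hiter n, Nat.add_comm, iter_succ, h.2.1.2]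
    exact hxy
  · rintro m ⟨hm1, hmy⟩
    obtain ⟨u, hu⟩ := h.1 m
    have h1 : g u = some y := by
      have e1 : g.iter (m + 1) x = (g.iter m x).bind g := iter_succ g m x
      rw [hu] at e1
      have e2 : g.iter (1 + m) x = some y := by rw [← hiter m]; exact hmy
      rw [Nat.add_comm] at e2
      rw [e2] at e1
      exact e1.symm
    have : u = x := hg.1 u x y h1 hxy
    exact h.2.2 ⟨hm1, this ▸ hu⟩

lemma cyc_iter (hg : g.Valid) {x y n k : ℕ} (h : g.CycPt x n) (hxy : g.iter k x = some y) :
    g.CycPt y n := by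
  induction k generalizing y with
  | zero => rw [iter_zero] at hxy; cases hxy; exact h
  | succ k ih =>
      rw [iter_succ] at hxy
      cases hu : g.iter k x with
      | none => rw [hu] at hxy; cases hxy
      | some u => rw [hu] at hxy; exact cyc_step g hg (ih hu) hxy

def orbit (g : PB) (x : ℕ) : Set ℕ := {z | ∃ k, g.iter k x = some z}

lemma mem_orbit_self (x : ℕ) : x ∈ orbit g x := ⟨0, rfl⟩

lemma orbit_trans {x y z : ℕ} (hy : y ∈ orbit g x) (hz : z ∈ orbit g y) : z ∈ orbit g x := by
  obtain ⟨k, hk⟩ := hy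
  obtain ⟨m, hm⟩ := hz
  exact ⟨k + m, by rw [iter_add, hk]; exact hm⟩

lemma orbit_back {x y n k : ℕ} (h : g.CycPt x n) (hk : g.iter k x = some y) :
    x ∈ orbit g y := by
  have hn1 : 1 ≤ n := cycpt_pos g h
  have hk' : g.iter (k % n) x = some y := by rw [← cyc_mod g h]; exact hk
  have hlt : k % n < n := Nat.mod_lt _ (by omega)
  refine ⟨n - k % n, ?_⟩
  have := iter_add g (k % n) (n - k % n) x
  rw [Nat.add_sub_cancel' (Nat.le_of_lt hlt), h.2.1.2, hk'] at this
  exact this.symm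

lemma orbit_eq {x y n k : ℕ} (h : g.CycPt x n) (hk : g.iter k x = some y) :
    orbit g y = orbit g x := by
  apply Set.eq_of_subset_of_subset
  · intro z hz
    exact orbit_trans g ⟨k, hk⟩ hz
  · intro z hz
    exact orbit_trans g (orbit_back g h hk) hz

noncomputable def mrep (g : PB) (x : ℕ) : ℕ := sInf (orbit g x)

lemma mrep_mem (x : ℕ) : g.mrep x ∈ orbit g x := Nat.sInf_mem ⟨x, mem_orbit_self g x⟩

lemma mrep_eq_of {x y n k : ℕ} (h : g.CycPt x n) (hk : g.iter k x = some y) :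
    g.mrep y = g.mrep x := by
  unfold mrep
  rw [orbit_eq g h hk]

def CycPts (g : PB) : Set ℕ := {x | ∃ n, 2 ≤ n ∧ g.CycPt x n}

lemma cycPts_subset_supp : CycPts g ⊆ Supp g := by
  rintro x ⟨n, hn2, h⟩
  intro hfix
  have := h.2.2 ⟨Nat.le_refl 1, by rw [iter_one]; exact hfix⟩
  omega

def R (g : PB) : Set ℕ := {c | c ∈ CycPts g ∧ g.mrep c = c}

noncomputable def kOf (g : PB) (y : ℕ) : ℕ := sInf {k | g.iter k (g.mrep y) = some y}

/-- Package of facts for a cycle point. -/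
lemma cyc_pkg (hg : g.Valid) {y n : ℕ} (hn2 : 2 ≤ n) (hy : g.CycPt y n) :
    g.mrep y ∈ R g ∧ g.CycPt (g.mrep y) n ∧ g.kOf y < n ∧
      g.iter (g.kOf y) (g.mrep y) = some y := by
  obtain ⟨k, hk⟩ := mrep_mem g y
  have hc : g.CycPt (g.mrep y) n := cyc_iter g hg hy hk
  have hrep : g.mrep (g.mrep y) = g.mrep y := mrep_eq_of g hy hk
  have hyorb : y ∈ orbit g (g.mrep y) := orbit_back g hy hk
  have hne : {k | g.iter k (g.mrep y) = some y}.Nonempty := hyorb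
  have hmem : g.iter (g.kOf y) (g.mrep y) = some y := Nat.sInf_mem hne
  have hlt : g.kOf y < n := by
    by_contra hge
    push_neg at hge
    have h2 : g.iter (g.kOf y % n) (g.mrep y) = some y := by
      rw [← cyc_mod g hc]; exact hmem
    have hle : g.kOf y ≤ g.kOf y % n := Nat.sInf_le h2
    have : g.kOf y % n < n := Nat.mod_lt _ (by omega)
    omega
  exact ⟨⟨⟨n, hn2, hc⟩, hrep⟩, hc, hlt, hmem⟩

lemma kOf_unique (hg : g.Valid) {y n k : ℕ} (hn2 : 2 ≤ n) (hy : g.CycPt y n)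
    (hk : k < n) (h : g.iter k (g.mrep y) = some y) : k = g.kOf y := by
  obtain ⟨_, hc, hlt, hmem⟩ := cyc_pkg g hg hn2 hy
  exact cyc_inj_lt g hc hk hlt (by rw [h, hmem])

lemma R_cycpt {c : ℕ} (hc : c ∈ R g) : g.CycPt c (g.clen c) ∧ 2 ≤ g.clen c := by
  obtain ⟨⟨n, hn2, hcy⟩, _⟩ := hc
  rw [clen_eq g hcy]
  exact ⟨hcy, hn2⟩

def Iso (g : PB) : Set ℕ := {x | x ∉ g.Dom ∧ x ∉ g.Ran}

lemma iso_subset_supp : Iso g ⊆ Supp g := by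
  rintro x ⟨hD, _⟩
  intro hfix
  exact hD (show g x ≠ none by rw [hfix]; exact fun h => nomatch h)

lemma chain_not_cyc (hg : g.Valid) {x : ℕ} (h1 : x ∈ ChainPts g) (h2 : x ∈ CycPts g) :
    False := by
  obtain ⟨a, ha, k, hk, hik⟩ := h1
  obtain ⟨n, hn2, hcy⟩ := h2
  obtain ⟨_, e, he, _, heD⟩ := qlen_spec g hg ha
  have hx : g.iter (g.qlen a - k) x = some e := by
    have := iter_add g k (g.qlen a - k) a
    rw [Nat.add_sub_cancel' hk, he, hik] at this
    exact this.symm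
  have hge : g e = none := by
    by_contra hne
    exact heD hne
  obtain ⟨y, hy⟩ := hcy.1 (g.qlen a - k + 1)
  rw [iter_succ, hx, Option.bind_some (f := g), hge] at hy
  exact nomatch hy

lemma chain_not_iso (hg : g.Valid) {x : ℕ} (h1 : x ∈ ChainPts g) (h2 : x ∈ Iso g) :
    False := by
  obtain ⟨a, ha, k, hk, hik⟩ := h1
  rcases Nat.eq_zero_or_pos k with hk0 | hk1
  · rw [hk0, iter_zero] at hik
    cases hik
    exact h2.1 ha.1
  · exact h2.2 (mem_Ran_of_iter g hk1 hik)

lemma cyc_not_iso {x : ℕ} (h1 : x ∈ CycPts g) (h2 : x ∈ Iso g) : False := by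
  obtain ⟨n, _, hcy⟩ := h1
  obtain ⟨y, hy⟩ := hcy.1 1
  rw [iter_one] at hy
  exact h2.1 (show g x ≠ none by rw [hy]; exact fun h => nomatch h)

lemma classify (hg : g.Valid) {x : ℕ} (hx : x ∈ Supp g) :
    x ∈ ChainPts g ∨ x ∈ CycPts g ∨ x ∈ Iso g := by
  by_cases htot : ∀ k, ∃ y, g.iter k x = some y
  · exact Or.inr (Or.inl (cycpt_of_total g hg hx htot))
  · push_neg at htot
    obtain ⟨kd, hkd⟩ := htot
    have hkdnone : g.iter kd x = none := by
      cases h : g.iter kd x with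
      | none => rfl
      | some y => exact absurd h (hkd y)
    set K := {k | ∃ a, g.iter k a = some x} with hK
    set N := hg.2.toFinset.card with hN
    have hbdd : ∀ k ∈ K, k ≤ N := by
      rintro k ⟨a, hka⟩
      have haS : a ∈ Supp g := by
        by_contra hfix
        rw [notMem_supp] at hfix
        have h0 := iter_fix g hfix k
        rw [h0] at hka
        have hxa : a = x := Option.some_inj.mp hka
        subst hxa
        rw [iter_fix g hfix kd] at hkdnone
        exact nomatch hkdnone
      have hdef : ∀ j ≤ k, ∃ z, g.iter j a = some z := fun j hj => iter_some_of_le g hka hj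
      have key : ∀ i j : ℕ, i < j → j ≤ k → g.iter i a = g.iter j a → False := by
        intro i j hlt hjk heq
        obtain ⟨u, hu⟩ := hdef i (by omega)
        have hper : g.iter (j - i) u = some u := by
          have e1 := iter_add g i (j - i) a
          rw [Nat.add_sub_cancel' (Nat.le_of_lt hlt), hu, Option.bind_some] at e1
          rw [← e1, ← heq]
          exact hu
        have hxu : g.iter (k - i) u = some x := by
          have e1 := iter_add g i (k - i) a
          rw [Nat.add_sub_cancel' (by omega : i ≤ k), hu, Option.bind_some] at e1
          rw [← e1]
          exact hka
        set m := j - i with hm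
        have hm1 : 1 ≤ m := by omega
        have hmul : ∀ t, g.iter (t * m) u = some u := by
          intro t
          induction t with
          | zero => rw [Nat.zero_mul]; rfl
          | succ t ih =>
              have h2 : (t + 1) * m = t * m + m := by ring
              rw [h2, iter_add, ih]
              exact hper
        have htotu : ∀ t, ∃ z, g.iter t u = some z := by
          intro t
          obtain ⟨z, hz⟩ := iter_some_of_le g hper (Nat.le_of_lt (Nat.mod_lt t (by omega)))
          refine ⟨z, ?_⟩
          conv_lhs => rw [show t = t / m * m + t % m from (Nat.div_add_mod' t m).symm]
          rw [iter_add, hmul]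
          exact hz
        obtain ⟨z, hz⟩ := htotu (k - i + kd)
        rw [iter_add, hxu, Option.bind_some, hkdnone] at hz
        exact nomatch hz
      have hinj : Set.InjOn (fun j => (g.iter j a).getD 0) (Finset.range (k+1) : Set ℕ) := by
        intro i hi j hj hij
        simp only [Finset.coe_range, Set.mem_Iio] at hi hj
        obtain ⟨zi, hzi⟩ := hdef i (by omega)
        obtain ⟨zj, hzj⟩ := hdef j (by omega)
        simp only [hzi, hzj, Option.getD_some] at hij
        have heq : g.iter i a = g.iter j a := by rw [hzi, hzj, hij]
        rcases lt_trichotomy i j with h | h | h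
        · exact (key i j h (by omega) heq).elim
        · exact h
        · exact (key j i h (by omega) heq.symm).elim
      have hmaps : ∀ j ∈ Finset.range (k+1), (g.iter j a).getD 0 ∈ hg.2.toFinset := by
        intro j hj
        rw [Finset.mem_range] at hj
        obtain ⟨z, hz⟩ := hdef j (by omega)
        rw [hz]
        rw [Set.Finite.mem_toFinset]
        exact supp_iter g hg haS hz
      have := Finset.card_le_card_of_injOn _ hmaps hinj
      rw [Finset.card_range] at this
      omega
    have hKne : K.Nonempty := ⟨0, x, rfl⟩
    have hbdd' : BddAbove K := ⟨N, fun k hk => hbdd k hk⟩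
    have hk₀mem : sSup K ∈ K := Nat.sSup_mem hKne hbdd'
    set k₀ := sSup K with hk₀
    obtain ⟨a₀, ha₀⟩ := hk₀mem
    have ha₀R : a₀ ∉ g.Ran := by
      rintro ⟨w, hw⟩
      have hmem : (1 + k₀) ∈ K := ⟨w, by rw [iter_add, iter_one, hw]; exact ha₀⟩
      have := le_csSup hbdd' hmem
      omega
    by_cases hDom : a₀ ∈ g.Dom
    · left
      have haQ : a₀ ∈ Q g := ⟨hDom, ha₀R⟩
      refine ⟨a₀, haQ, k₀, ?_, ha₀⟩
      by_contra hgt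
      push_neg at hgt
      obtain ⟨hq1, e, he, _, heD⟩ := qlen_spec g hg haQ
      have hge : g e = none := by by_contra hne; exact heD hne
      have h1 : g.iter (g.qlen a₀ + 1) a₀ = none := by rw [iter_succ, he, Option.bind_some (f := g)]; exact hge
      have h2 := iter_none_le g h1 (show g.qlen a₀ + 1 ≤ k₀ by omega)
      rw [h2] at ha₀
      exact nomatch ha₀
    · right; right
      have hga₀ : g a₀ = none := by
        by_contra hne
        exact hDom hne
      have hk₀0 : k₀ = 0 := by
        by_contra h0
        have h1 : g.iter 1 a₀ = none := by rw [iter_one]; exact hga₀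
        have h2 := iter_none_le g h1 (show 1 ≤ k₀ by omega)
        rw [h2] at ha₀
        exact nomatch ha₀
      rw [hk₀0, iter_zero] at ha₀
      injection ha₀ with hax
      subst hax
      exact ⟨hDom, ha₀R⟩

lemma cyc_card (hg : g.Valid) (n : ℕ) (hn : 2 ≤ n) :
    {x | g.CycPt x n}.ncard = {c | c ∈ R g ∧ g.clen c = n}.ncard * n := by
  have hmemR : ∀ x, g.CycPt x n → g.mrep x ∈ R g ∧ g.clen (g.mrep x) = n ∧ g.kOf x < n ∧
      g.iter (g.kOf x) (g.mrep x) = some x := by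
    intro x hx
    obtain ⟨hR, hc, hlt, hmem⟩ := cyc_pkg g hg hn hx
    exact ⟨hR, clen_eq g hc, hlt, hmem⟩
  have hcyc : ∀ c, c ∈ R g ∧ g.clen c = n → g.CycPt c n := by
    rintro c ⟨hcR, hclen⟩
    have := (R_cycpt g hcR).1
    rw [hclen] at this
    exact this
  let F : {x | g.CycPt x n} → {c | c ∈ R g ∧ g.clen c = n} × Fin n := fun x =>
    (⟨g.mrep x.1, (hmemR x.1 x.2).1, (hmemR x.1 x.2).2.1⟩, ⟨g.kOf x.1, (hmemR x.1 x.2).2.2.1⟩)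
  have hbij : Function.Bijective F := by
    constructor
    · rintro ⟨x, hx⟩ ⟨x', hx'⟩ hFeq
      have h1 : g.mrep x = g.mrep x' := congrArg (fun p => (p.1 : ℕ)) hFeq
      have h2 : g.kOf x = g.kOf x' := congrArg (fun p => (p.2 : ℕ)) hFeq
      have e1 := (hmemR x hx).2.2.2
      have e2 := (hmemR x' hx').2.2.2
      rw [h1, h2] at e1
      rw [e1] at e2
      exact Subtype.ext (Option.some_inj.mp e2)
    · rintro ⟨⟨c, hc⟩, ⟨k, hk⟩⟩
      have hcyc' := hcyc c hc
      obtain ⟨z, hz⟩ := hcyc'.1 k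
      have hzcyc : g.CycPt z n := cyc_iter g hg hcyc' hz
      refine ⟨⟨z, hzcyc⟩, ?_⟩
      have hmz : g.mrep z = c := by
        rw [mrep_eq_of g hcyc' hz]
        exact hc.1.2
      have hkz : k = g.kOf z := by
        apply kOf_unique g hg hn hzcyc hk
        rw [hmz]
        exact hz
      apply Prod.ext
      · exact Subtype.ext hmz
      · exact Fin.ext hkz.symm
  have e1 : Nat.card {x | g.CycPt x n} = Nat.card ({c | c ∈ R g ∧ g.clen c = n} × Fin n) :=
    Nat.card_congr (Equiv.ofBijective F hbij)
  rw [Nat.card_prod] at e1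
  rw [show Nat.card (Fin n) = n from by simp] at e1
  rw [Nat.card_coe_set_eq, Nat.card_coe_set_eq] at e1
  exact e1

lemma exists_bijOn_of_ncard {A B : Set ℕ} (hA : A.Finite) (hB : B.Finite)
    (h : A.ncard = B.ncard) : ∃ f : ℕ → ℕ, Set.BijOn f A B := by
  have he : A.encard = B.encard := by
    rw [← hA.cast_ncard_eq, ← hB.cast_ncard_eq, h]
  exact Set.Finite.exists_bijOn_of_encard_eq hA he

lemma match_fn {A B : Set ℕ} (hA : A.Finite) (hB : B.Finite) (p q : ℕ → ℕ)
    (h : ∀ n, {a | a ∈ A ∧ p a = n}.ncard = {b | b ∈ B ∧ q b = n}.ncard) :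
    ∃ f : ℕ → ℕ, Set.BijOn f A B ∧ ∀ a ∈ A, q (f a) = p a := by
  have hFn : ∀ n : ℕ, ∃ f : ℕ → ℕ, Set.BijOn f {a | a ∈ A ∧ p a = n} {b | b ∈ B ∧ q b = n} := by
    intro n
    exact exists_bijOn_of_ncard (hA.subset (fun a ha => ha.1)) (hB.subset (fun b hb => hb.1)) (h n)
  choose F hF using hFn
  refine ⟨fun a => F (p a) a, ⟨?_, ?_, ?_⟩, ?_⟩
  · intro a ha
    exact ((hF (p a)).mapsTo ⟨ha, rfl⟩).1
  · intro a ha a' ha' heq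
    have heq' : F (p a) a = F (p a') a' := heq
    have h1 : q (F (p a) a) = p a := ((hF (p a)).mapsTo ⟨ha, rfl⟩).2
    have h2 : q (F (p a') a') = p a' := ((hF (p a')).mapsTo ⟨ha', rfl⟩).2
    rw [heq'] at h1
    rw [h1] at h2
    rw [h2] at heq'
    exact (hF (p a')).injOn ⟨ha, h2⟩ ⟨ha', rfl⟩ heq'
  · intro b hb
    obtain ⟨a, ha, hab⟩ := (hF (q b)).surjOn ⟨hb, rfl⟩
    refine ⟨a, ha.1, ?_⟩
    show F (p a) a = b
    rw [ha.2]
    exact hab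
  · intro a ha
    exact ((hF (p a)).mapsTo ⟨ha, rfl⟩).2

lemma extend_perm {A B : Set ℕ} (hA : A.Finite) (hB : B.Finite) {f : ℕ → ℕ}
    (hf : Set.BijOn f A B) :
    ∃ s : Equiv.Perm ℕ, {x | s x ≠ x}.Finite ∧ (∀ x ∈ A, s x = f x) ∧
      (∀ x, x ∉ A → s x ∉ B) := by
  have hcard : A.ncard = B.ncard := by
    rw [← hf.image_eq, Set.ncard_image_of_injOn hf.injOn]
  have hAB : A.encard = B.encard := by
    rw [← hA.cast_ncard_eq, ← hB.cast_ncard_eq, hcard]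
  have hdiff : (B \ A).encard = (A \ B).encard := by
    have := (Set.encard_eq_encard_iff_encard_diff_eq_encard_diff
      (hA.subset Set.inter_subset_left)).mp hAB
    exact this.symm
  obtain ⟨h, hh⟩ := Set.Finite.exists_bijOn_of_encard_eq (hB.subset Set.diff_subset) hdiff
  classical
  set σ : ℕ → ℕ := fun x => if x ∈ A then f x else if x ∈ B then h x else x with hσ
  have hσA : ∀ x ∈ A, σ x = f x := fun x hx => by simp only [hσ, if_pos hx]
  have hσBA : ∀ x, x ∉ A → x ∈ B → σ x = h x := fun x hx1 hx2 => by
    simp only [hσ, if_neg hx1, if_pos hx2]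
  have hσout : ∀ x, x ∉ A → x ∉ B → σ x = x := fun x hx1 hx2 => by
    simp only [hσ, if_neg hx1, if_neg hx2]
  have hval : ∀ x, (x ∈ A ∧ σ x ∈ B) ∨ (x ∉ A ∧ x ∈ B ∧ σ x ∈ A \ B) ∨
      (x ∉ A ∧ x ∉ B ∧ σ x = x) := by
    intro x
    by_cases h1 : x ∈ A
    · exact Or.inl ⟨h1, by rw [hσA x h1]; exact hf.mapsTo h1⟩
    · by_cases h2 : x ∈ B
      · exact Or.inr (Or.inl ⟨h1, h2, by rw [hσBA x h1 h2]; exact hh.mapsTo ⟨h2, h1⟩⟩)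
      · exact Or.inr (Or.inr ⟨h1, h2, hσout x h1 h2⟩)
  have hinj : Function.Injective σ := by
    intro x y heq
    rcases hval x with ⟨hx1, hx2⟩ | ⟨hx1, hx2, hx3⟩ | ⟨hx1, hx2, hx3⟩ <;>
      rcases hval y with ⟨hy1, hy2⟩ | ⟨hy1, hy2, hy3⟩ | ⟨hy1, hy2, hy3⟩
    · rw [hσA x hx1, hσA y hy1] at heq
      exact hf.injOn hx1 hy1 heq
    · exact absurd (heq ▸ hx2) hy3.2
    · rw [hy3] at heq
      exact absurd (heq ▸ hx2) hy2
    · exact absurd (heq.symm ▸ hy2) hx3.2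
    · rw [hσBA x hx1 hx2, hσBA y hy1 hy2] at heq
      exact hh.injOn ⟨hx2, hx1⟩ ⟨hy2, hy1⟩ heq
    · rw [hy3] at heq
      exact absurd (heq ▸ hx3.1) hy1
    · rw [hx3] at heq
      exact absurd (heq.symm ▸ hy2) hx2
    · rw [hx3] at heq
      exact absurd (heq.symm ▸ hy3.1) hx1
    · rw [hx3, hy3] at heq
      exact heq
  have hsurj : Function.Surjective σ := by
    intro y
    by_cases h1 : y ∈ B
    · obtain ⟨x, hx, hxy⟩ := hf.surjOn h1
      exact ⟨x, by rw [hσA x hx]; exact hxy⟩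
    · by_cases h2 : y ∈ A
      · obtain ⟨x, hx, hxy⟩ := hh.surjOn ⟨h2, h1⟩
        exact ⟨x, by rw [hσBA x hx.2 hx.1]; exact hxy⟩
      · exact ⟨y, hσout y h2 h1⟩
  refine ⟨Equiv.ofBijective σ ⟨hinj, hsurj⟩, ?_, ?_, ?_⟩
  · apply (hA.union hB).subset
    intro x hx
    by_contra hout
    rw [Set.mem_union] at hout
    push_neg at hout
    exact hx (hσout x hout.1 hout.2)
  · intro x hx
    exact hσA x hx
  · intro x hx
    rcases hval x with ⟨hx1, _⟩ | ⟨_, _, hx3⟩ | ⟨_, hx2, hx3⟩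
    · exact absurd hx1 hx
    · exact hx3.2
    · rw [show (Equiv.ofBijective σ ⟨hinj, hsurj⟩) x = σ x from rfl, hx3]
      exact hx2

lemma chainPts_def {y : ℕ} :
    y ∈ ChainPts g ↔ ∃ a, a ∈ Q g ∧ ∃ k, k ≤ g.qlen a ∧ g.iter k a = some y := Iff.rfl

open Classical in
noncomputable def chA (g : PB) (y : ℕ) : ℕ :=
  if h : y ∈ ChainPts g then ((chainPts_def g).mp h).choose else 0

open Classical in
noncomputable def chK (g : PB) (y : ℕ) : ℕ :=
  if h : y ∈ ChainPts g then (((chainPts_def g).mp h).choose_spec.2).choose else 0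

lemma ch_spec {y : ℕ} (hy : y ∈ ChainPts g) :
    g.chA y ∈ Q g ∧ g.chK y ≤ g.qlen (g.chA y) ∧ g.iter (g.chK y) (g.chA y) = some y := by
  unfold chA chK
  classical
  rw [dif_pos hy, dif_pos hy]
  exact ⟨((chainPts_def g).mp hy).choose_spec.1,
    (((chainPts_def g).mp hy).choose_spec.2).choose_spec⟩

lemma ch_eq (hg : g.Valid) {y a k : ℕ} (ha : a ∈ Q g) (hk : k ≤ g.qlen a)
    (hik : g.iter k a = some y) : g.chA y = a ∧ g.chK y = k := by
  have hy : y ∈ ChainPts g := ⟨a, ha, k, hk, hik⟩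
  obtain ⟨h1, h2, h3⟩ := ch_spec g hy
  exact chain_rep_unique g hg h1 ha h2 hk h3 hik

open Classical in
noncomputable def build (g₁ g₂ : PB) (β γ ε : ℕ → ℕ) (y : ℕ) : ℕ :=
  if y ∈ ChainPts g₂ then (g₁.iter (g₂.chK y) (β (g₂.chA y))).getD 0
  else if y ∈ CycPts g₂ then (g₁.iter (g₂.kOf y) (γ (g₂.mrep y))).getD 0
  else if y ∈ Iso g₂ then ε y else y

section Build

variable (g₁ g₂ : PB) (β γ ε : ℕ → ℕ)

lemma build_chain (hg₁ : g₁.Valid) (hg₂ : g₂.Valid) (hβ : Set.BijOn β (Q g₂) (Q g₁))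
    (hβq : ∀ a ∈ Q g₂, g₁.qlen (β a) = g₂.qlen a) {y a k : ℕ}
    (ha : a ∈ Q g₂) (hk : k ≤ g₂.qlen a) (hik : g₂.iter k a = some y) :
    g₁.iter k (β a) = some (build g₁ g₂ β γ ε y) ∧
      build g₁ g₂ β γ ε y ∈ ChainPts g₁ := by
  have hy : y ∈ ChainPts g₂ := ⟨a, ha, k, hk, hik⟩
  obtain ⟨hA, hK⟩ := ch_eq g₂ hg₂ ha hk hik
  have hk1 : k ≤ g₁.qlen (β a) := by rw [hβq a ha]; exact hk
  obtain ⟨z, hz⟩ := iter_defined_chain g₁ hg₁ (hβ.mapsTo ha) hk1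
  have hbz : build g₁ g₂ β γ ε y = z := by
    unfold build
    rw [if_pos hy, hA, hK, hz]
    rfl
  rw [hbz]
  exact ⟨hz, ⟨β a, hβ.mapsTo ha, k, hk1, hz⟩⟩

lemma build_cyc (hg₁ : g₁.Valid) (hg₂ : g₂.Valid) (hγ : Set.BijOn γ (R g₂) (R g₁))
    (hγc : ∀ c ∈ R g₂, g₁.clen (γ c) = g₂.clen c) {y n : ℕ} (hn : 2 ≤ n)
    (hy : g₂.CycPt y n) :
    g₁.CycPt (γ (g₂.mrep y)) n ∧
    g₁.iter (g₂.kOf y) (γ (g₂.mrep y)) = some (build g₁ g₂ β γ ε y) ∧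
    build g₁ g₂ β γ ε y ∈ CycPts g₁ ∧
    g₁.CycPt (build g₁ g₂ β γ ε y) n ∧
    g₁.mrep (build g₁ g₂ β γ ε y) = γ (g₂.mrep y) ∧
    g₁.kOf (build g₁ g₂ β γ ε y) = g₂.kOf y := by
  obtain ⟨hcR, hcC, hklt, hkit⟩ := cyc_pkg g₂ hg₂ hn hy
  have hγR : γ (g₂.mrep y) ∈ R g₁ := hγ.mapsTo hcR
  have hγn : g₁.CycPt (γ (g₂.mrep y)) n := by
    have h1 := (R_cycpt g₁ hγR).1
    rw [hγc _ hcR, clen_eq g₂ hcC] at h1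
    exact h1
  obtain ⟨z, hz⟩ := hγn.1 (g₂.kOf y)
  have hyCy : y ∈ CycPts g₂ := ⟨n, hn, hy⟩
  have hbz : build g₁ g₂ β γ ε y = z := by
    unfold build
    rw [if_neg (fun hc => chain_not_cyc g₂ hg₂ hc hyCy), if_pos hyCy, hz]
    rfl
  have hzC : g₁.CycPt z n := cyc_iter g₁ hg₁ hγn hz
  have hmz : g₁.mrep z = γ (g₂.mrep y) := by
    rw [mrep_eq_of g₁ hγn hz]
    exact hγR.2
  have hkz : g₁.kOf z = g₂.kOf y := by
    refine (kOf_unique g₁ hg₁ hn hzC hklt ?_).symm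
    rw [hmz]
    exact hz
  rw [hbz]
  exact ⟨hγn, hz, ⟨n, hn, hzC⟩, hzC, hmz, hkz⟩

lemma build_iso (hg₂ : g₂.Valid) {y : ℕ} (hy : y ∈ Iso g₂) :
    build g₁ g₂ β γ ε y = ε y := by
  unfold build
  rw [if_neg (fun hc => chain_not_iso g₂ hg₂ hc hy),
    if_neg (fun hc => cyc_not_iso g₂ hc hy), if_pos hy]

lemma build_bijOn (hg₁ : g₁.Valid) (hg₂ : g₂.Valid)
    (hβ : Set.BijOn β (Q g₂) (Q g₁)) (hβq : ∀ a ∈ Q g₂, g₁.qlen (β a) = g₂.qlen a)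
    (hγ : Set.BijOn γ (R g₂) (R g₁)) (hγc : ∀ c ∈ R g₂, g₁.clen (γ c) = g₂.clen c)
    (hε : Set.BijOn ε (Iso g₂) (Iso g₁)) :
    Set.BijOn (build g₁ g₂ β γ ε) (Supp g₂) (Supp g₁) := by
  set f := build g₁ g₂ β γ ε with hf
  have hCh : ∀ y ∈ ChainPts g₂, f y ∈ ChainPts g₁ := by
    rintro y ⟨a, ha, k, hk, hik⟩
    exact (build_chain g₁ g₂ β γ ε hg₁ hg₂ hβ hβq ha hk hik).2
  have hCy : ∀ y ∈ CycPts g₂, f y ∈ CycPts g₁ := by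
    rintro y ⟨n, hn, hy⟩
    exact (build_cyc g₁ g₂ β γ ε hg₁ hg₂ hγ hγc hn hy).2.2.1
  have hIs : ∀ y ∈ Iso g₂, f y ∈ Iso g₁ := by
    intro y hy
    rw [hf, build_iso g₁ g₂ β γ ε hg₂ hy]
    exact hε.mapsTo hy
  refine ⟨?_, ?_, ?_⟩
  · intro y hy
    rcases classify g₂ hg₂ hy with h | h | h
    · exact chainPts_subset_supp g₁ hg₁ (hCh y h)
    · exact cycPts_subset_supp g₁ (hCy y h)
    · exact iso_subset_supp g₁ (hIs y h)
  · intro y hy y' hy' heq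
    rcases classify g₂ hg₂ hy with h | h | h <;> rcases classify g₂ hg₂ hy' with h' | h' | h'
    · -- chain / chain
      obtain ⟨a, ha, k, hk, hik⟩ := h
      obtain ⟨a', ha', k', hk', hik'⟩ := h'
      have h1 := (build_chain g₁ g₂ β γ ε hg₁ hg₂ hβ hβq ha hk hik).1
      have h1' := (build_chain g₁ g₂ β γ ε hg₁ hg₂ hβ hβq ha' hk' hik').1
      rw [← hf] at h1 h1'
      rw [heq] at h1
      obtain ⟨hba, hkk⟩ := chain_rep_unique g₁ hg₁ (hβ.mapsTo ha) (hβ.mapsTo ha')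
        (by rw [hβq a ha]; exact hk) (by rw [hβq a' ha']; exact hk') h1 h1'
      have haa : a = a' := hβ.injOn ha ha' hba
      subst haa
      subst hkk
      rw [hik] at hik'
      exact Option.some_inj.mp hik'
    · exact absurd (heq ▸ hCh y h) (fun hc => chain_not_cyc g₁ hg₁ hc (hCy y' h'))
    · exact absurd (heq ▸ hCh y h) (fun hc => chain_not_iso g₁ hg₁ hc (hIs y' h'))
    · exact absurd (heq.symm ▸ hCh y' h') (fun hc => chain_not_cyc g₁ hg₁ hc (hCy y h))
    · -- cyc / cyc
      obtain ⟨n, hn, hcy⟩ := h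
      obtain ⟨n', hn', hcy'⟩ := h'
      obtain ⟨_, _, _, hC, hm, hk⟩ := build_cyc g₁ g₂ β γ ε hg₁ hg₂ hγ hγc hn hcy
      obtain ⟨_, _, _, hC', hm', hk'⟩ := build_cyc g₁ g₂ β γ ε hg₁ hg₂ hγ hγc hn' hcy'
      rw [← hf] at hC hm hk hC' hm' hk'
      rw [heq] at hC hm hk
      have hγeq : γ (g₂.mrep y) = γ (g₂.mrep y') := by rw [← hm, ← hm']
      have hmem : g₂.mrep y ∈ R g₂ := (cyc_pkg g₂ hg₂ hn hcy).1
      have hmem' : g₂.mrep y' ∈ R g₂ := (cyc_pkg g₂ hg₂ hn' hcy').1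
      have hmeq : g₂.mrep y = g₂.mrep y' := hγ.injOn hmem hmem' hγeq
      have hkeq : g₂.kOf y = g₂.kOf y' := by rw [← hk, ← hk']
      have e1 := (cyc_pkg g₂ hg₂ hn hcy).2.2.2
      have e2 := (cyc_pkg g₂ hg₂ hn' hcy').2.2.2
      rw [hmeq, hkeq] at e1
      rw [e1] at e2
      exact Option.some_inj.mp e2
    · exact absurd (heq ▸ hCy y h) (fun hc => cyc_not_iso g₁ hc (hIs y' h'))
    · exact absurd (heq.symm ▸ hCh y' h') (fun hc => chain_not_iso g₁ hg₁ hc (hIs y h))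
    · exact absurd (heq.symm ▸ hCy y' h') (fun hc => cyc_not_iso g₁ hc (hIs y h))
    · rw [hf, build_iso g₁ g₂ β γ ε hg₂ h, build_iso g₁ g₂ β γ ε hg₂ h'] at heq
      exact hε.injOn h h' heq
  · intro z hz
    rcases classify g₁ hg₁ hz with h | h | h
    · obtain ⟨b, hb, k, hk, hik⟩ := h
      obtain ⟨a, ha, hba⟩ := hβ.surjOn hb
      have hk2 : k ≤ g₂.qlen a := by
        rw [← hβq a ha, hba]
        exact hk
      obtain ⟨y, hy⟩ := iter_defined_chain g₂ hg₂ ha hk2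
      have h1 := (build_chain g₁ g₂ β γ ε hg₁ hg₂ hβ hβq ha hk2 hy).1
      rw [hba, hik] at h1
      exact ⟨y, chainPts_subset_supp g₂ hg₂ ⟨a, ha, k, hk2, hy⟩,
        (Option.some_inj.mp h1).symm⟩
    · obtain ⟨n, hn, hcy⟩ := h
      obtain ⟨hc₁R, hc₁C, hklt, hkit⟩ := cyc_pkg g₁ hg₁ hn hcy
      obtain ⟨c, hc, hgc⟩ := hγ.surjOn hc₁R
      have hcn : g₂.CycPt c n := by
        have h1 := (R_cycpt g₂ hc).1
        have h2 : g₂.clen c = n := by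
          rw [← hγc c hc, hgc]
          exact clen_eq g₁ hc₁C
        rw [h2] at h1
        exact h1
      obtain ⟨y, hy⟩ := hcn.1 (g₁.kOf z)
      have hycy : g₂.CycPt y n := cyc_iter g₂ hg₂ hcn hy
      have hmy : g₂.mrep y = c := by
        rw [mrep_eq_of g₂ hcn hy]
        exact hc.2
      have hky : g₂.kOf y = g₁.kOf z := by
        refine (kOf_unique g₂ hg₂ hn hycy hklt ?_).symm
        rw [hmy]
        exact hy
      have h1 := (build_cyc g₁ g₂ β γ ε hg₁ hg₂ hγ hγc hn hycy).2.1
      rw [hky, hmy, hgc, hkit] at h1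
      exact ⟨y, cycPts_subset_supp g₂ ⟨n, hn, hycy⟩, (Option.some_inj.mp h1).symm⟩
    · obtain ⟨y, hy, hey⟩ := hε.surjOn h
      refine ⟨y, iso_subset_supp g₂ hy, ?_⟩
      rw [hf, build_iso g₁ g₂ β γ ε hg₂ hy]
      exact hey

lemma build_comm (hg₁ : g₁.Valid) (hg₂ : g₂.Valid)
    (hβ : Set.BijOn β (Q g₂) (Q g₁)) (hβq : ∀ a ∈ Q g₂, g₁.qlen (β a) = g₂.qlen a)
    (hγ : Set.BijOn γ (R g₂) (R g₁)) (hγc : ∀ c ∈ R g₂, g₁.clen (γ c) = g₂.clen c)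
    (hε : Set.BijOn ε (Iso g₂) (Iso g₁)) :
    ∀ y ∈ Supp g₂, g₁ (build g₁ g₂ β γ ε y) = (g₂ y).map (build g₁ g₂ β γ ε) := by
  set f := build g₁ g₂ β γ ε with hf
  intro y hy
  rcases classify g₂ hg₂ hy with h | h | h
  · obtain ⟨a, ha, k, hk, hik⟩ := h
    have h1 := (build_chain g₁ g₂ β γ ε hg₁ hg₂ hβ hβq ha hk hik).1
    rcases Nat.lt_or_ge k (g₂.qlen a) with hlt | hge
    · obtain ⟨y', hy'⟩ := iter_defined_chain g₂ hg₂ ha (by omega : k + 1 ≤ g₂.qlen a)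
      have hgy : g₂ y = some y' := by
        rw [iter_succ, hik, Option.bind_some (f := g₂)] at hy'
        exact hy'
      have h1' := (build_chain g₁ g₂ β γ ε hg₁ hg₂ hβ hβq ha
        (by omega : k + 1 ≤ g₂.qlen a) hy').1
      have hlhs : g₁ (f y) = some (f y') := by
        rw [← h1']
        rw [iter_succ, h1, Option.bind_some (f := g₁)]
      rw [hlhs, hgy]
      rfl
    · have hkeq : k = g₂.qlen a := by omega
      subst hkeq
      obtain ⟨_, e, he, heR, heD⟩ := qlen_spec g₂ hg₂ ha
      rw [hik] at he
      have hye : y = e := Option.some_inj.mp he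
      have hgy : g₂ y = none := by
        rw [hye]
        by_contra hne
        exact heD hne
      obtain ⟨_, e₁, he₁, _, he₁D⟩ := qlen_spec g₁ hg₁ (hβ.mapsTo ha)
      rw [hβq a ha] at he₁
      rw [← hf] at h1
      rw [h1] at he₁
      have hfe : f y = e₁ := Option.some_inj.mp he₁
      have hg1 : g₁ (f y) = none := by
        rw [hfe]
        by_contra hne
        exact he₁D hne
      rw [hg1, hgy]
      rfl
  · obtain ⟨n, hn, hcy⟩ := h
    obtain ⟨hcR, hcC, hklt, hkit⟩ := cyc_pkg g₂ hg₂ hn hcy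
    obtain ⟨hγn, hz, -, -, -, -⟩ := build_cyc g₁ g₂ β γ ε hg₁ hg₂ hγ hγc hn hcy
    rw [← hf] at hz
    obtain ⟨y', hy'⟩ := hcC.1 (g₂.kOf y + 1)
    have hgy : g₂ y = some y' := by
      rw [iter_succ, hkit, Option.bind_some (f := g₂)] at hy'
      exact hy'
    have hy'C : g₂.CycPt y' n := cyc_iter g₂ hg₂ hcC hy'
    have hmy' : g₂.mrep y' = g₂.mrep y := by
      rw [mrep_eq_of g₂ hcC hy']
      exact hcR.2
    have hky' : g₂.kOf y' = (g₂.kOf y + 1) % n := by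
      refine (kOf_unique g₂ hg₂ hn hy'C (Nat.mod_lt _ (by omega)) ?_).symm
      rw [hmy', ← cyc_mod g₂ hcC]
      exact hy'
    obtain ⟨-, hz', -, -, -, -⟩ := build_cyc g₁ g₂ β γ ε hg₁ hg₂ hγ hγc hn hy'C
    rw [← hf] at hz'
    rw [hky', hmy'] at hz'
    have hlhs : g₁ (f y) = some (f y') := by
      rw [← hz', ← cyc_mod g₁ hγn, iter_succ, hz, Option.bind_some (f := g₁)]
    rw [hlhs, hgy]
    rfl
  · have hgy : g₂ y = none := by
      by_contra hne
      exact h.1 hne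
    have hfI : f y ∈ Iso g₁ := by
      rw [hf, build_iso g₁ g₂ β γ ε hg₂ h]
      exact hε.mapsTo h
    have hg1 : g₁ (f y) = none := by
      by_contra hne
      exact hfI.1 hne
    rw [hg1, hgy]
    rfl

end Build
end PB

/-- If `r₁, r₂ ∈ R_∞` have the same invariants — for each `n` the same
number of quasi-cycles of length `n` (i.e. of points `a ∈ D \ I` with `m(r,a) = n`), the
same number of points on nontrivial cycles of each length `n ≥ 2`, and the same number of
points outside `D(r) ∪ I(r)` — then `r₁ = s r₂ s⁻¹` for some finite permutation `s ∈ S_∞`. -/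

theorem stmt4 (g₁ g₂ : PB) (h₁ : g₁.Valid) (h₂ : g₂.Valid)
    (hq : ∀ n, {a | a ∈ g₁.Dom \ g₁.Ran ∧ g₁.qlen a = n}.ncard =
               {a | a ∈ g₂.Dom \ g₂.Ran ∧ g₂.qlen a = n}.ncard)
    (hc : ∀ n, 2 ≤ n →
      {x | g₁.CycPt x n}.ncard = {x | g₂.CycPt x n}.ncard)
    (hm : {x | x ∉ g₁.Dom ∧ x ∉ g₁.Ran}.ncard = {x | x ∉ g₂.Dom ∧ x ∉ g₂.Ran}.ncard) :
    ∃ s : Equiv.Perm ℕ, {x | s x ≠ x}.Finite ∧ g₁ = PB.conj s g₂ := by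
  open PB in
  have hS₁ : (Supp g₁).Finite := supp_finite g₁ h₁
  have hS₂ : (Supp g₂).Finite := supp_finite g₂ h₂
  have hQ₁ : (Q g₁).Finite := hS₁.subset (fun a ha => Q_subset_supp g₁ ha)
  have hQ₂ : (Q g₂).Finite := hS₂.subset (fun a ha => Q_subset_supp g₂ ha)
  have hR₁ : (R g₁).Finite := hS₁.subset (fun c hc => cycPts_subset_supp g₁ hc.1)
  have hR₂ : (R g₂).Finite := hS₂.subset (fun c hc => cycPts_subset_supp g₂ hc.1)
  have hI₁ : (Iso g₁).Finite := hS₁.subset (iso_subset_supp g₁)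
  have hI₂ : (Iso g₂).Finite := hS₂.subset (iso_subset_supp g₂)
  have hqfib : ∀ n, {a | a ∈ Q g₂ ∧ g₂.qlen a = n}.ncard =
      {a | a ∈ Q g₁ ∧ g₁.qlen a = n}.ncard := fun n => (hq n).symm
  obtain ⟨β, hβ, hβq⟩ := match_fn hQ₂ hQ₁ g₂.qlen g₁.qlen hqfib
  have hcfib : ∀ n, {c | c ∈ R g₂ ∧ g₂.clen c = n}.ncard =
      {c | c ∈ R g₁ ∧ g₁.clen c = n}.ncard := by
    intro n
    rcases Nat.lt_or_ge n 2 with h2 | h2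
    · have e₁ : {c | c ∈ R g₁ ∧ g₁.clen c = n} = ∅ := by
        ext c
        simp only [Set.mem_setOf_eq, Set.mem_empty_iff_false, iff_false, not_and]
        intro hcR hcl
        have := (R_cycpt g₁ hcR).2
        omega
      have e₂ : {c | c ∈ R g₂ ∧ g₂.clen c = n} = ∅ := by
        ext c
        simp only [Set.mem_setOf_eq, Set.mem_empty_iff_false, iff_false, not_and]
        intro hcR hcl
        have := (R_cycpt g₂ hcR).2
        omega
      rw [e₁, e₂]
    · have hn0 : 0 < n := by omega
      refine Nat.eq_of_mul_eq_mul_right hn0 ?_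
      rw [← cyc_card g₂ h₂ n h2, ← cyc_card g₁ h₁ n h2, hc n h2]
  obtain ⟨γ, hγ, hγc⟩ := match_fn hR₂ hR₁ g₂.clen g₁.clen hcfib
  have hifib : ∀ n : ℕ, {a | a ∈ Iso g₂ ∧ (fun _ : ℕ => 0) a = n}.ncard =
      {a | a ∈ Iso g₁ ∧ (fun _ : ℕ => 0) a = n}.ncard := by
    intro n
    rcases Nat.eq_zero_or_pos n with h0 | h0
    · subst h0
      have e₁ : {a | a ∈ Iso g₂ ∧ (fun _ : ℕ => 0) a = 0} = Iso g₂ := by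
        ext a; simp
      have e₂ : {a | a ∈ Iso g₁ ∧ (fun _ : ℕ => 0) a = 0} = Iso g₁ := by
        ext a; simp
      rw [e₁, e₂]
      exact hm.symm
    · have e₁ : {a | a ∈ Iso g₂ ∧ (fun _ : ℕ => 0) a = n} = ∅ := by
        ext a; simp; omega
      have e₂ : {a | a ∈ Iso g₁ ∧ (fun _ : ℕ => 0) a = n} = ∅ := by
        ext a; simp; omega
      rw [e₁, e₂]
  obtain ⟨ε, hε, -⟩ := match_fn hI₂ hI₁ (fun _ => 0) (fun _ => 0) hifib
  have hbij := build_bijOn g₁ g₂ β γ ε h₁ h₂ hβ hβq hγ hγc hε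
  have hcomm := build_comm g₁ g₂ β γ ε h₁ h₂ hβ hβq hγ hγc hε
  obtain ⟨s, hsfin, hsA, hsB⟩ := extend_perm hS₂ hS₁ hbij
  refine ⟨s, hsfin, ?_⟩
  funext x
  show g₁ x = ((g₂ (s⁻¹ x)).map s : Option ℕ)
  have hx : x = s (s⁻¹ x) := (Equiv.apply_symm_apply s x).symm
  set y := s⁻¹ x with hy
  by_cases hyS : y ∈ Supp g₂
  · have h1 : g₁ x = g₁ (PB.build g₁ g₂ β γ ε y) := by
      rw [hx, hsA y hyS]
    rw [h1, hcomm y hyS]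
    cases hgy : g₂ y with
    | none => rfl
    | some z =>
        have hzS : z ∈ Supp g₂ := supp_step g₂ h₂ hyS hgy
        simp only [Option.map_some]
        rw [hsA z hzS]
  · have hfix : g₂ y = some y := (notMem_supp g₂).mp hyS
    rw [hfix]
    have hsy : s y ∉ Supp g₁ := hsB y hyS
    have : g₁ (s y) = some (s y) := (notMem_supp g₁).mp hsy
    rw [hx]
    rw [this]
    rfl
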